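/- Let g : ℝ × ℝ³ → ℝ be C¹ with ∇ₓg nonvanishing on the zero level set, satisfying ∂ₜg + V_I·∇ₓg = 0 where V_I = V_I N with N = ∇ₓg/‖∇ₓg‖. Then ∂ₜ(‖∇ₓg‖) + V_I·∇ₓ(‖∇ₓg‖) = −‖∇ₓg‖ N·∇ₓV_I along the zero level set. -/

import Mathlib

open Real

section Aux

local notation "E3" => EuclideanSpace ℝ (Fin 3)

lemma hasFDerivAt_norm_comp' {F G : Type*} [NormedAddCommGroup F] [NormedSpace ℝ F]
    [NormedAddCommGroup G] [InnerProductSpace ℝ G]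
    {Φ : F → G} {D : F →L[ℝ] G} {p : F} (hΦ : HasFDerivAt Φ D p) (h0 : Φ p ≠ 0) :
    HasFDerivAt (fun q => ‖Φ q‖) ((‖Φ p‖⁻¹ : ℝ) • ((innerSL ℝ (Φ p)).comp D)) p := by
  have hi : HasFDerivAt (fun q => (inner ℝ (Φ q) (Φ q) : ℝ))
      ((fderivInnerCLM ℝ (Φ p, Φ p)).comp (D.prod D)) p := hΦ.inner ℝ hΦ
  have hne : (inner ℝ (Φ p) (Φ p) : ℝ) ≠ 0 := by
    rw [real_inner_self_eq_norm_mul_norm]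
    exact mul_ne_zero (norm_ne_zero_iff.mpr h0) (norm_ne_zero_iff.mpr h0)
  have hs := hi.sqrt hne
  have heq : (fun q => Real.sqrt (inner ℝ (Φ q) (Φ q) : ℝ)) = fun q => ‖Φ q‖ :=
    funext fun q => by rw [real_inner_self_eq_norm_mul_norm, Real.sqrt_mul_self (norm_nonneg _)]
  rw [heq] at hs
  convert hs using 1
  ext v
  have hnp : ‖Φ p‖ ≠ 0 := norm_ne_zero_iff.mpr h0
  simp only [ContinuousLinearMap.smul_apply, ContinuousLinearMap.comp_apply, innerSL_apply_apply,
    fderivInnerCLM_apply, ContinuousLinearMap.prod_apply, real_inner_self_eq_norm_mul_norm,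
    Real.sqrt_mul_self (norm_nonneg (Φ p)), smul_eq_mul]
  rw [real_inner_comm (D v) (Φ p)]
  field_simp
  ring

/-- `toDual.symm` as a genuine `ℝ`-continuous-linear map. -/
noncomputable def toDualSymmCLM : StrongDual ℝ E3 →L[ℝ] E3 where
  toFun := (InnerProductSpace.toDual ℝ E3).symm
  map_add' a b := by simp
  map_smul' c a := by simp
  cont := (InnerProductSpace.toDual ℝ E3).symm.continuous

@[simp] lemma toDualSymmCLM_apply (L : StrongDual ℝ E3) :
    toDualSymmCLM L = (InnerProductSpace.toDual ℝ E3).symm L := rfl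

end Aux

/-- Level-set transport of the area density factor: if g is C² with nonvanishing spatial
gradient on its zero level set and satisfies ∂ₜg + V_I·∇ₓg = 0 with normal interface velocity
V_I = V_I N, N = ∇ₓg/‖∇ₓg‖, then ∂ₜ‖∇ₓg‖ + V_I·∇ₓ‖∇ₓg‖ = −‖∇ₓg‖ N·∇ₓV_I
on the zero level set. -/
theorem levelset_gradient_norm_evolution
    (g VI : ℝ → EuclideanSpace ℝ (Fin 3) → ℝ)
    (hg : ContDiff ℝ 2 (fun p : ℝ × EuclideanSpace ℝ (Fin 3) => g p.1 p.2))
    (hVI : ContDiff ℝ 1 (fun p : ℝ × EuclideanSpace ℝ (Fin 3) => VI p.1 p.2))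
    (hgrad : ∀ t x, g t x = 0 → gradient (g t) x ≠ 0)
    -- kinematic equation ∂ₜg + V_I·∇ₓg = 0, where V_I·∇ₓg = VI ‖∇ₓg‖ since V_I = VI·N
    (hkin : ∀ t x, deriv (fun s => g s x) t + VI t x * ‖gradient (g t) x‖ = 0) :
    ∀ t x, g t x = 0 →
      deriv (fun s => ‖gradient (g s) x‖) t
        + (inner ℝ (VI t x • ((‖gradient (g t) x‖)⁻¹ • gradient (g t) x))
            (gradient (fun y => ‖gradient (g t) y‖) x) : ℝ)
      = - ‖gradient (g t) x‖ *
          (inner ℝ ((‖gradient (g t) x‖)⁻¹ • gradient (g t) x) (gradient (VI t) x) : ℝ) := by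
  intro t x hgx
  set G : ℝ × EuclideanSpace ℝ (Fin 3) → ℝ := fun p => g p.1 p.2 with hGdef
  set W : ℝ × EuclideanSpace ℝ (Fin 3) → ℝ := fun p => VI p.1 p.2 with hWdef
  have hGd : Differentiable ℝ G := hg.differentiable (by norm_num)
  have hWd : Differentiable ℝ W := hVI.differentiable one_ne_zero
  have hslice : ∀ s y, HasFDerivAt (g s)
      ((fderiv ℝ G (s, y)).comp (ContinuousLinearMap.inr ℝ ℝ _)) y := fun s y =>
    (hGd (s, y)).hasFDerivAt.comp y (hasFDerivAt_prodMk_right s y)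
  set T : ((ℝ × EuclideanSpace ℝ (Fin 3)) →L[ℝ] ℝ) →L[ℝ] EuclideanSpace ℝ (Fin 3) :=
    toDualSymmCLM.comp
      ((ContinuousLinearMap.compL ℝ (EuclideanSpace ℝ (Fin 3))
          (ℝ × EuclideanSpace ℝ (Fin 3)) ℝ).flip
        (ContinuousLinearMap.inr ℝ ℝ _)) with hTdef
  have hTapp : ∀ L : (ℝ × EuclideanSpace ℝ (Fin 3)) →L[ℝ] ℝ,
      T L = (InnerProductSpace.toDual ℝ _).symm
        (L.comp (ContinuousLinearMap.inr ℝ ℝ _)) := fun L => rfl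
  set Φ : ℝ × EuclideanSpace ℝ (Fin 3) → EuclideanSpace ℝ (Fin 3) :=
    fun p => T (fderiv ℝ G p) with hΦdef
  set φ : ℝ × EuclideanSpace ℝ (Fin 3) → ℝ := fun p => ‖Φ p‖ with hφdef
  have hgradEq : ∀ s y, gradient (g s) y = Φ (s, y) := by
    intro s y
    simp only [hΦdef]
    rw [hTapp]
    exact ((hslice s y).hasGradientAt).gradient
  -- second derivative
  have hfd1 : ContDiff ℝ 1 (fderiv ℝ G) := hg.fderiv_right (by norm_num)
  have hH := ((hfd1.differentiable one_ne_zero) (t, x)).hasFDerivAt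
  set H := fderiv ℝ (fderiv ℝ G) (t, x) with hHdef
  have hΦd : HasFDerivAt Φ (T.comp H) (t, x) := T.hasFDerivAt.comp (t, x) hH
  set v₀ : EuclideanSpace ℝ (Fin 3) := gradient (g t) x with hv₀def
  have hv : Φ (t, x) = v₀ := (hgradEq t x).symm
  have hv0 : Φ (t, x) ≠ 0 := by rw [hv]; exact hgrad t x hgx
  set n : ℝ := ‖v₀‖ with hndef
  have hn0 : n ≠ 0 := norm_ne_zero_iff.mpr (hgrad t x hgx)
  have hnφ : φ (t, x) = n := by simp only [hφdef]; rw [hv]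
  set Lf := ((‖Φ (t, x)‖)⁻¹ : ℝ) • ((innerSL ℝ (Φ (t, x))).comp (T.comp H)) with hLfdef
  have hφd : HasFDerivAt φ Lf (t, x) := hasFDerivAt_norm_comp' hΦd hv0
  have hLeval : ∀ w, Lf w = n⁻¹ * (H w) ((0 : ℝ), v₀) := by
    intro w
    rw [hLfdef]
    simp only [ContinuousLinearMap.smul_apply, ContinuousLinearMap.comp_apply, innerSL_apply_apply,
      smul_eq_mul, hv]
    congr 1
    rw [hTapp, real_inner_comm, InnerProductSpace.toDual_symm_apply]
    simp
  -- the kinematic identity, rewritten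
  have hpartial : ∀ p : ℝ × EuclideanSpace ℝ (Fin 3),
      deriv (fun s => g s p.2) p.1 = fderiv ℝ G p ((1 : ℝ), (0 : EuclideanSpace ℝ (Fin 3))) := by
    intro p
    have hc : HasDerivAt (fun s : ℝ => (s, p.2)) ((1 : ℝ), (0 : EuclideanSpace ℝ (Fin 3))) p.1 :=
      HasDerivAt.prodMk (hasDerivAt_id p.1) (hasDerivAt_const p.1 p.2)
    exact ((hGd p).hasFDerivAt.comp_hasDerivAt p.1 hc).deriv
  have hφall : ∀ p : ℝ × EuclideanSpace ℝ (Fin 3), ‖gradient (g p.1) p.2‖ = φ p := by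
    intro p
    rw [hgradEq]
  have hkin' : ∀ p : ℝ × EuclideanSpace ℝ (Fin 3),
      fderiv ℝ G p ((1 : ℝ), (0 : EuclideanSpace ℝ (Fin 3))) = -(W p * φ p) := by
    intro p
    have h := hkin p.1 p.2
    rw [hpartial p, hφall p] at h
    have hWp : W p = VI p.1 p.2 := rfl
    rw [hWp]
    linarith
  have hfe : (fun p : ℝ × EuclideanSpace ℝ (Fin 3) =>
        fderiv ℝ G p ((1 : ℝ), (0 : EuclideanSpace ℝ (Fin 3))))
      = fun p => -(W p * φ p) := funext hkin'
  have hev : HasFDerivAt (fun p : ℝ × EuclideanSpace ℝ (Fin 3) =>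
        fderiv ℝ G p ((1 : ℝ), (0 : EuclideanSpace ℝ (Fin 3))))
      ((ContinuousLinearMap.apply ℝ ℝ
          ((1 : ℝ), (0 : EuclideanSpace ℝ (Fin 3)))).comp H) (t, x) :=
    (ContinuousLinearMap.apply ℝ ℝ
      ((1 : ℝ), (0 : EuclideanSpace ℝ (Fin 3)))).hasFDerivAt.comp (t, x) hH
  rw [hfe] at hev
  have hmul : HasFDerivAt (fun p => -(W p * φ p))
      (-(W (t, x) • Lf + φ (t, x) • fderiv ℝ W (t, x))) (t, x) :=
    ((hWd (t, x)).hasFDerivAt.mul hφd).neg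
  have hkey := hev.unique hmul
  have hkey2 := congrArg
    (fun L : (ℝ × EuclideanSpace ℝ (Fin 3)) →L[ℝ] ℝ => L ((0 : ℝ), v₀)) hkey
  simp only [ContinuousLinearMap.comp_apply, ContinuousLinearMap.apply_apply,
    ContinuousLinearMap.neg_apply, ContinuousLinearMap.add_apply,
    ContinuousLinearMap.smul_apply, smul_eq_mul, hnφ] at hkey2
  have hsym : H ((1 : ℝ), (0 : EuclideanSpace ℝ (Fin 3))) ((0 : ℝ), v₀)
      = H ((0 : ℝ), v₀) ((1 : ℝ), (0 : EuclideanSpace ℝ (Fin 3))) := by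
    rw [hHdef]
    exact (hg.contDiffAt.isSymmSndFDerivAt (by norm_num)) _ _
  -- derivative in time of the gradient norm
  have hfun1 : (fun s => ‖gradient (g s) x‖) = fun s => φ (s, x) :=
    funext fun s => hφall (s, x)
  have hc : HasDerivAt (fun s : ℝ => (s, x)) ((1 : ℝ), (0 : EuclideanSpace ℝ (Fin 3))) t :=
    HasDerivAt.prodMk (hasDerivAt_id t) (hasDerivAt_const t x)
  have hD1 : deriv (fun s => ‖gradient (g s) x‖) t
      = Lf ((1 : ℝ), (0 : EuclideanSpace ℝ (Fin 3))) := by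
    rw [hfun1]
    exact (hφd.comp_hasDerivAt t hc).deriv
  -- spatial gradient of the gradient norm
  have hslφ : HasFDerivAt (fun y => ‖gradient (g t) y‖)
      (Lf.comp (ContinuousLinearMap.inr ℝ ℝ _)) x := by
    have h := hφd.comp x (hasFDerivAt_prodMk_right t x)
    have hfun2 : (fun y => ‖gradient (g t) y‖) = fun y => φ (t, y) :=
      funext fun y => hφall (t, y)
    rw [hfun2]
    exact h
  have hgφ : gradient (fun y => ‖gradient (g t) y‖) x =
      (InnerProductSpace.toDual ℝ _).symm
        (Lf.comp (ContinuousLinearMap.inr ℝ ℝ _)) :=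
    hslφ.hasGradientAt.gradient
  -- spatial gradient of VI
  have hslW : HasFDerivAt (VI t)
      ((fderiv ℝ W (t, x)).comp (ContinuousLinearMap.inr ℝ ℝ _)) x :=
    (hWd (t, x)).hasFDerivAt.comp x (hasFDerivAt_prodMk_right t x)
  have hgW : gradient (VI t) x =
      (InnerProductSpace.toDual ℝ _).symm
        ((fderiv ℝ W (t, x)).comp (ContinuousLinearMap.inr ℝ ℝ _)) :=
    hslW.hasGradientAt.gradient
  -- assemble
  have hI1 : (inner ℝ (VI t x • ((n : ℝ)⁻¹ • v₀))
      ((InnerProductSpace.toDual ℝ (EuclideanSpace ℝ (Fin 3))).symm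
        (Lf.comp (ContinuousLinearMap.inr ℝ ℝ (EuclideanSpace ℝ (Fin 3))))) : ℝ)
      = VI t x * (n⁻¹ * Lf ((0 : ℝ), v₀)) := by
    rw [real_inner_smul_left, real_inner_smul_left, real_inner_comm,
      InnerProductSpace.toDual_symm_apply]
    simp
  have hI2 : (inner ℝ ((n : ℝ)⁻¹ • v₀)
      ((InnerProductSpace.toDual ℝ (EuclideanSpace ℝ (Fin 3))).symm
        ((fderiv ℝ W (t, x)).comp
          (ContinuousLinearMap.inr ℝ ℝ (EuclideanSpace ℝ (Fin 3))))) : ℝ)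
      = n⁻¹ * (fderiv ℝ W (t, x)) ((0 : ℝ), v₀) := by
    rw [real_inner_smul_left, real_inner_comm, InnerProductSpace.toDual_symm_apply]
    simp
  rw [hD1, hgφ, hgW, hI1, hI2]
  rw [hLeval ((1 : ℝ), (0 : EuclideanSpace ℝ (Fin 3))), hLeval ((0 : ℝ), v₀)]
  have hW' : W (t, x) = VI t x := rfl
  rw [hLeval ((0 : ℝ), v₀), hW'] at hkey2
  rw [hsym, hkey2]
  field_simp
  ring
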